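/- Let C > 0 and let ζ̂ : (0,∞) → (0,∞) be three times continuously differentiable with ζ̂'(z) > 0 for all z > 0, satisfying (z² − ζ̂'(z)^{−2}) ζ̂''(z) + C z/ζ̂(z)² − 2/ζ̂(z) = 0 for all z > 0. Define θ₁(z) := ζ̂(z) − z ζ̂'(z) and φ₁(z) := z θ₁'(z). Then for all z > 0: − z φ₁'(z) + d/dz( ζ̂'(z)^{−2} θ₁'(z) ) − (2/ζ̂(z)²)(1 − C z/ζ̂(z)) θ₁(z) = φ₁(z). -/

import Mathlib

/-- The time-translation pair `(θ₁, φ₁) = (ζ̂ - Λζ̂, Λζ̂ - Λ²ζ̂)` is an eigenfunction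
with eigenvalue 1 of the operator linearizing the self-similar flow around the
Larson–Penston solution. -/
theorem growing_mode_identity
    (C : ℝ) (hC : 0 < C)
    (ζ θ φ : ℝ → ℝ)
    (hζ_pos : ∀ z > (0:ℝ), 0 < ζ z)
    (hζ_C3 : ContDiffOn ℝ 3 ζ (Set.Ioi 0))
    (hζ' : ∀ z > (0:ℝ), 0 < deriv ζ z)
    (hODE : ∀ z > (0:ℝ), (z ^ 2 - ((deriv ζ z) ^ 2)⁻¹) * deriv (deriv ζ) z
        + C * z / (ζ z) ^ 2 - 2 / ζ z = 0)
    (hθ : ∀ z > (0:ℝ), θ z = ζ z - z * deriv ζ z)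
    (hφ : ∀ z > (0:ℝ), φ z = z * deriv θ z) :
    ∀ z > (0:ℝ),
      -(z * deriv φ z) + deriv (fun x => ((deriv ζ x) ^ 2)⁻¹ * deriv θ x) z
        - (2 / (ζ z) ^ 2) * (1 - C * z / ζ z) * θ z = φ z := by
  have hd1 : ContDiffOn ℝ 2 (deriv ζ) (Set.Ioi 0) :=
    hζ_C3.deriv_of_isOpen isOpen_Ioi (by norm_num)
  have hd2 : ContDiffOn ℝ 1 (deriv (deriv ζ)) (Set.Ioi 0) :=
    hd1.deriv_of_isOpen isOpen_Ioi (by norm_num)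
  have Dζ : ∀ x ∈ Set.Ioi (0:ℝ), HasDerivAt ζ (deriv ζ x) x := fun x hx =>
    ((hζ_C3.differentiableOn (by norm_num)).differentiableAt
      (isOpen_Ioi.mem_nhds hx)).hasDerivAt
  have Dζ' : ∀ x ∈ Set.Ioi (0:ℝ), HasDerivAt (deriv ζ) (deriv (deriv ζ) x) x := fun x hx =>
    ((hd1.differentiableOn (by norm_num)).differentiableAt
      (isOpen_Ioi.mem_nhds hx)).hasDerivAt
  have Dζ'' : ∀ x ∈ Set.Ioi (0:ℝ), HasDerivAt (deriv (deriv ζ))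
      (deriv (deriv (deriv ζ)) x) x := fun x hx =>
    ((hd2.differentiableOn (by norm_num)).differentiableAt
      (isOpen_Ioi.mem_nhds hx)).hasDerivAt
  have hθ' : ∀ x ∈ Set.Ioi (0:ℝ), deriv θ x = -(x * deriv (deriv ζ) x) := by
    intro x hx
    have hev : θ =ᶠ[nhds x] fun y => ζ y - y * deriv ζ y :=
      Filter.eventuallyEq_of_mem (isOpen_Ioi.mem_nhds hx) (fun y hy => hθ y hy)
    rw [hev.deriv_eq]
    have h := (Dζ x hx).sub ((hasDerivAt_id x).mul (Dζ' x hx))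
    simp only [id_eq] at h
    refine h.deriv.trans ?_; ring
  intro z hz
  have hzmem : z ∈ Set.Ioi (0:ℝ) := hz
  have hzo : Set.Ioi (0:ℝ) ∈ nhds z := isOpen_Ioi.mem_nhds hz
  set a := ζ z with ha
  set a' := deriv ζ z with ha'
  set a'' := deriv (deriv ζ) z with ha''
  set a''' := deriv (deriv (deriv ζ)) z with ha'''
  have haz : a ≠ 0 := ne_of_gt (hζ_pos z hz)
  have ha'z : a' ≠ 0 := ne_of_gt (hζ' z hz)
  -- deriv φ
  have hφev : φ =ᶠ[nhds z] fun x => -(x ^ 2 * deriv (deriv ζ) x) :=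
    Filter.eventuallyEq_of_mem hzo (fun x hx => by
      rw [hφ x hx, hθ' x hx]; ring)
  have hDφ : deriv φ z = -(2 * z * a'' + z ^ 2 * a''') := by
    rw [hφev.deriv_eq]
    have h := (((hasDerivAt_id z).pow 2).mul (Dζ'' z hzmem)).neg
    simp only [id_eq, Pi.pow_apply, Pi.neg_apply, Pi.mul_apply, Pi.inv_apply, Pi.sub_apply, Pi.add_apply, Pi.div_apply] at h
    refine h.deriv.trans ?_; push_cast; ring
  -- deriv of the product term
  have hprodev : (fun x => ((deriv ζ x) ^ 2)⁻¹ * deriv θ x)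
      =ᶠ[nhds z] fun x => ((deriv ζ x) ^ 2)⁻¹ * (-(x * deriv (deriv ζ) x)) :=
    Filter.eventuallyEq_of_mem hzo (fun x hx => by rw [hθ' x hx])
  have hDprod : deriv (fun x => ((deriv ζ x) ^ 2)⁻¹ * deriv θ x) z =
      -(2 * a' * a'') / (a' ^ 2) ^ 2 * (-(z * a''))
        + (a' ^ 2)⁻¹ * (-(a'' + z * a''')) := by
    rw [hprodev.deriv_eq]
    have h := (((Dζ' z hzmem).pow 2).inv (pow_ne_zero 2 ha'z)).mul
      (((hasDerivAt_id z).mul (Dζ'' z hzmem)).neg)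
    simp only [id_eq, Pi.pow_apply, Pi.neg_apply, Pi.mul_apply, Pi.inv_apply, Pi.sub_apply, Pi.add_apply, Pi.div_apply] at h
    refine h.deriv.trans ?_; push_cast; rw [← ha', ← ha'', ← ha''']; ring
  -- differentiated ODE
  have hODEev : (fun x => (x ^ 2 - ((deriv ζ x) ^ 2)⁻¹) * deriv (deriv ζ) x
      + C * x / (ζ x) ^ 2 - 2 / ζ x) =ᶠ[nhds z] fun _ => (0:ℝ) :=
    Filter.eventuallyEq_of_mem hzo (fun x hx => hODE x hx)
  have hd := ((((hasDerivAt_id z).pow 2).sub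
      (((Dζ' z hzmem).pow 2).inv (pow_ne_zero 2 ha'z))).mul (Dζ'' z hzmem)).add
      (((hasDerivAt_const z C).mul (hasDerivAt_id z)).div
        ((Dζ z hzmem).pow 2) (pow_ne_zero 2 haz))
  have hd2' := hd.sub ((hasDerivAt_const z 2).div (Dζ z hzmem) haz)
  simp only [id_eq, Pi.pow_apply, Pi.neg_apply, Pi.mul_apply, Pi.inv_apply, Pi.sub_apply, Pi.add_apply, Pi.div_apply] at hd2'
  have hE : (2 * z + (2 * a' * a'') / (a' ^ 2) ^ 2) * a''
        + (z ^ 2 - (a' ^ 2)⁻¹) * a'''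
        + (C * a ^ 2 - C * z * (2 * a * a')) / (a ^ 2) ^ 2
        + (2 * a') / a ^ 2 = 0 := by
    have h0 : deriv (fun x => (x ^ 2 - ((deriv ζ x) ^ 2)⁻¹) * deriv (deriv ζ) x
        + C * x / (ζ x) ^ 2 - 2 / ζ x) z = 0 := by
      rw [hODEev.deriv_eq, deriv_const]
    replace h0 := hd2'.deriv.symm.trans h0
    rw [← h0]; push_cast; ring
  have h1 := hODE z hz
  rw [hDφ, hDprod, hθ z hz, hφ z hz, hθ' z hzmem]
  rw [← ha, ← ha', ← ha''] at h1 ⊢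
  field_simp at h1 hE ⊢
  rw [← sub_eq_zero]
  apply mul_left_cancel₀ (pow_ne_zero 3 haz)
  rw [mul_zero]
  linear_combination z * a ^ 3 * hE + a ^ 4 * a' * h1
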